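/- Fix K > 0 and α ∈ (1/2, 1). For all 0 < s < t and y > 0 one has |q*(t−s, y) − q*(t, y)| ≤ ( Γ(α − 1/2)/(π Γ(α)) ) √(K y) ( √t − √(t−s) ). -/

import Mathlib

open MeasureTheory Set

/-- Standard normal cumulative distribution function. -/
noncomputable def normCdf (z : ℝ) : ℝ :=
  (Real.sqrt (2 * Real.pi))⁻¹ * ∫ u in Set.Iic z, Real.exp (-u ^ 2 / 2)

/-- The Black–Scholes call price function with strike `K`. -/
noncomputable def qBS (K t y : ℝ) : ℝ :=
  y * normCdf ((2 * Real.log (y / K) + t) / (2 * Real.sqrt t))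
    - K * normCdf ((2 * Real.log (y / K) - t) / (2 * Real.sqrt t))

/-- The time-changed Black–Scholes price
`q*(t,y) = (Γ(α)Γ(1−α))⁻¹ ∫₀¹ s^{α−1}(1−s)^{−α} q_BS(ts,y) ds` for `t > 0`,
with `q*(0,y) = (y−K)₊`. -/
noncomputable def qStar (K α t y : ℝ) : ℝ :=
  if t = 0 then max (y - K) 0
  else (Real.Gamma α * Real.Gamma (1 - α))⁻¹ *
    ∫ s in Set.Ioo (0 : ℝ) 1, s ^ (α - 1) * (1 - s) ^ (-α) * qBS K (t * s) y

section auxGauss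

lemma gauss_integrable : Integrable (fun u : ℝ => Real.exp (-u ^ 2 / 2)) := by
  have : ∀ u : ℝ, Real.exp (-u ^ 2 / 2) = Real.exp (-(1/2 : ℝ) * u ^ 2) := by
    intro u; ring_nf
  simpa [this] using integrable_exp_neg_mul_sq (by norm_num : (0:ℝ) < 1/2)

lemma gauss_integral : ∫ u : ℝ, Real.exp (-u ^ 2 / 2) = Real.sqrt (2 * Real.pi) := by
  have : ∀ u : ℝ, Real.exp (-u ^ 2 / 2) = Real.exp (-(1/2 : ℝ) * u ^ 2) := by
    intro u; ring_nf
  rw [funext this, integral_gaussian]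
  rw [show Real.pi / (1/2) = 2 * Real.pi by ring]

lemma normCdf_nonneg (z : ℝ) : 0 ≤ normCdf z := by
  have h : 0 ≤ ∫ u in Set.Iic z, Real.exp (-u ^ 2 / 2) :=
    integral_nonneg fun u => (Real.exp_pos _).le
  exact mul_nonneg (inv_nonneg.2 (Real.sqrt_nonneg _)) h

lemma normCdf_le_one (z : ℝ) : normCdf z ≤ 1 := by
  have h : (∫ u in Set.Iic z, Real.exp (-u ^ 2 / 2)) ≤ ∫ u : ℝ, Real.exp (-u ^ 2 / 2) := by
    apply setIntegral_le_integral gauss_integrable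
    filter_upwards with u using (Real.exp_pos _).le
  rw [gauss_integral] at h
  have hs : 0 < Real.sqrt (2 * Real.pi) := Real.sqrt_pos.2 (by positivity)
  calc normCdf z ≤ (Real.sqrt (2 * Real.pi))⁻¹ * Real.sqrt (2 * Real.pi) :=
        mul_le_mul_of_nonneg_left h (inv_nonneg.2 hs.le)
    _ = 1 := inv_mul_cancel₀ hs.ne'

lemma gauss_continuous : Continuous (fun u : ℝ => Real.exp (-u ^ 2 / 2)) := by
  continuity

lemma hasDerivAt_normCdf (z : ℝ) :
    HasDerivAt normCdf ((Real.sqrt (2 * Real.pi))⁻¹ * Real.exp (-z ^ 2 / 2)) z := by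
  have hrepr : ∀ w : ℝ, normCdf w = (Real.sqrt (2 * Real.pi))⁻¹ *
      ((∫ u in Set.Iic (0:ℝ), Real.exp (-u ^ 2 / 2)) +
        ∫ u in (0:ℝ)..w, Real.exp (-u ^ 2 / 2)) := by
    intro w
    rw [← intervalIntegral.integral_Iic_sub_Iic gauss_integrable.integrableOn
      gauss_integrable.integrableOn]
    simp [normCdf]
  have hd : HasDerivAt (fun w => ∫ u in (0:ℝ)..w, Real.exp (-u ^ 2 / 2))
      (Real.exp (-z ^ 2 / 2)) z :=
    intervalIntegral.integral_hasDerivAt_right gauss_integrable.intervalIntegrable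
      (gauss_continuous.stronglyMeasurableAtFilter _ _) gauss_continuous.continuousAt
  have := (hd.const_add (∫ u in Set.Iic (0:ℝ), Real.exp (-u ^ 2 / 2))).const_mul
      (Real.sqrt (2 * Real.pi))⁻¹
  refine HasDerivAt.congr_of_eventuallyEq this (Filter.Eventually.of_forall hrepr)

end auxGauss

section auxQBS

lemma qBS_hasDerivAt {K y : ℝ} (hK : 0 < K) (hy : 0 < y) {t : ℝ} (ht : 0 < t) :
    HasDerivAt (fun t => qBS K t y)
      (y * ((Real.sqrt (2 * Real.pi))⁻¹ *
        Real.exp (-((2 * Real.log (y / K) + t) / (2 * Real.sqrt t)) ^ 2 / 2)) *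
        (1 / (2 * Real.sqrt t))) t := by
  set m := Real.log (y / K) with hm
  have hst : 0 < Real.sqrt t := Real.sqrt_pos.2 ht
  have htt : Real.sqrt t * Real.sqrt t = t := Real.mul_self_sqrt ht.le
  have hsq : HasDerivAt Real.sqrt (1 / (2 * Real.sqrt t)) t := Real.hasDerivAt_sqrt ht.ne'
  have hden : HasDerivAt (fun t => 2 * Real.sqrt t) (2 * (1 / (2 * Real.sqrt t))) t :=
    hsq.const_mul 2
  have hnumP : HasDerivAt (fun t : ℝ => 2 * m + t) 1 t := by
    simpa using (hasDerivAt_id t).const_add (2 * m)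
  have hnumM : HasDerivAt (fun t : ℝ => 2 * m - t) (-1) t := by
    simpa using (hasDerivAt_id t).const_sub (2 * m)
  have hdP : HasDerivAt (fun t => (2 * m + t) / (2 * Real.sqrt t))
      ((1 * (2 * Real.sqrt t) - (2 * m + t) * (2 * (1 / (2 * Real.sqrt t)))) /
        (2 * Real.sqrt t) ^ 2) t := hnumP.div hden (by positivity)
  have hdM : HasDerivAt (fun t => (2 * m - t) / (2 * Real.sqrt t))
      (((-1) * (2 * Real.sqrt t) - (2 * m - t) * (2 * (1 / (2 * Real.sqrt t)))) /
        (2 * Real.sqrt t) ^ 2) t := hnumM.div hden (by positivity)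
  have hΦP := (hasDerivAt_normCdf ((2 * m + t) / (2 * Real.sqrt t))).comp t hdP
  have hΦM := (hasDerivAt_normCdf ((2 * m - t) / (2 * Real.sqrt t))).comp t hdM
  have hf := (hΦP.const_mul y).sub (hΦM.const_mul K)
  have key : K * Real.exp (-((2 * m - t) / (2 * Real.sqrt t)) ^ 2 / 2)
      = y * Real.exp (-((2 * m + t) / (2 * Real.sqrt t)) ^ 2 / 2) := by
    have hsq2 : ((2 * m + t) / (2 * Real.sqrt t)) ^ 2
        = ((2 * m - t) / (2 * Real.sqrt t)) ^ 2 + 2 * m := by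
      rw [div_pow, div_pow, mul_pow]
      rw [Real.sq_sqrt ht.le]
      field_simp
      ring
    rw [hsq2, neg_add, add_div, Real.exp_add]
    rw [show -(2 * m) / 2 = -m by ring, Real.exp_neg, hm, Real.exp_log (by positivity)]
    field_simp
  refine HasDerivAt.congr_deriv hf ?_
  symm
  have hDdiff : ((1 * (2 * Real.sqrt t) - (2 * m + t) * (2 * (1 / (2 * Real.sqrt t)))) /
        (2 * Real.sqrt t) ^ 2)
      - (((-1) * (2 * Real.sqrt t) - (2 * m - t) * (2 * (1 / (2 * Real.sqrt t)))) /
        (2 * Real.sqrt t) ^ 2) = 1 / (2 * Real.sqrt t) := by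
    rw [div_sub_div_same]
    rw [show (2 * Real.sqrt t) ^ 2 = 4 * t by rw [mul_pow, Real.sq_sqrt ht.le]; ring]
    field_simp
    nlinarith [htt]
  set c := (Real.sqrt (2 * Real.pi))⁻¹
  set EP := Real.exp (-((2 * m + t) / (2 * Real.sqrt t)) ^ 2 / 2)
  set EM := Real.exp (-((2 * m - t) / (2 * Real.sqrt t)) ^ 2 / 2)
  set DP := (1 * (2 * Real.sqrt t) - (2 * m + t) * (2 * (1 / (2 * Real.sqrt t)))) /
        (2 * Real.sqrt t) ^ 2
  set DM := ((-1) * (2 * Real.sqrt t) - (2 * m - t) * (2 * (1 / (2 * Real.sqrt t)))) /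
        (2 * Real.sqrt t) ^ 2
  calc y * (c * EP) * (1 / (2 * Real.sqrt t)) = y * (c * EP) * (DP - DM) := by rw [hDdiff]
    _ = y * (c * EP * DP) - c * DM * (K * EM) := by rw [key]; ring
    _ = y * (c * EP * DP) - K * (c * EM * DM) := by ring

lemma vega_le {K y : ℝ} (hK : 0 < K) (hy : 0 < y) {t : ℝ} (ht : 0 < t) :
    y * ((Real.sqrt (2 * Real.pi))⁻¹ *
        Real.exp (-((2 * Real.log (y / K) + t) / (2 * Real.sqrt t)) ^ 2 / 2)) *
        (1 / (2 * Real.sqrt t))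
      ≤ Real.sqrt (K * y) * (Real.sqrt (2 * Real.pi))⁻¹ * (1 / (2 * Real.sqrt t)) := by
  set m := Real.log (y / K) with hm
  have hst : 0 < Real.sqrt t := Real.sqrt_pos.2 ht
  have h1 : ((2 * m + t) / (2 * Real.sqrt t)) ^ 2 ≥ m := by
    rw [div_pow, mul_pow, Real.sq_sqrt ht.le]
    rw [ge_iff_le, le_div_iff₀ (by positivity)]
    nlinarith [sq_nonneg (2 * m - t)]
  have h2 : Real.exp (-((2 * m + t) / (2 * Real.sqrt t)) ^ 2 / 2) ≤ Real.exp (-m / 2) := by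
    apply Real.exp_le_exp.2
    linarith
  have h3 : Real.exp (-m / 2) = Real.sqrt (K / y) := by
    have : K / y = Real.exp (-m / 2) ^ 2 := by
      rw [sq, ← Real.exp_add, show -m / 2 + -m / 2 = -m by ring, hm, ← Real.log_inv,
        Real.exp_log (by positivity), inv_div]
    rw [this, Real.sqrt_sq (Real.exp_pos _).le]
  have h4 : y * Real.exp (-m / 2) = Real.sqrt (K * y) := by
    rw [h3, Real.sqrt_div hK.le, Real.sqrt_mul hK.le]
    have hsy : Real.sqrt y ≠ 0 := by positivity
    field_simp
    rw [Real.sq_sqrt hy.le]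
  have h5 : y * Real.exp (-((2 * m + t) / (2 * Real.sqrt t)) ^ 2 / 2) ≤ Real.sqrt (K * y) := by
    rw [← h4]
    exact mul_le_mul_of_nonneg_left h2 hy.le
  calc y * ((Real.sqrt (2 * Real.pi))⁻¹ *
        Real.exp (-((2 * m + t) / (2 * Real.sqrt t)) ^ 2 / 2)) * (1 / (2 * Real.sqrt t))
      = (y * Real.exp (-((2 * m + t) / (2 * Real.sqrt t)) ^ 2 / 2)) *
        (Real.sqrt (2 * Real.pi))⁻¹ * (1 / (2 * Real.sqrt t)) := by ring
    _ ≤ Real.sqrt (K * y) * (Real.sqrt (2 * Real.pi))⁻¹ * (1 / (2 * Real.sqrt t)) := by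
        apply mul_le_mul_of_nonneg_right _ (by positivity)
        exact mul_le_mul_of_nonneg_right h5 (by positivity)

lemma qBS_abs_sub_le {K y : ℝ} (hK : 0 < K) (hy : 0 < y) {a b : ℝ} (ha : 0 < a) (hab : a ≤ b) :
    |qBS K a y - qBS K b y|
      ≤ Real.sqrt (K * y) * (Real.sqrt (2 * Real.pi))⁻¹ * (Real.sqrt b - Real.sqrt a) := by
  set C := Real.sqrt (K * y) * (Real.sqrt (2 * Real.pi))⁻¹ with hC
  have hCpos : 0 ≤ C := by positivity
  have hdf : ∀ x ∈ Set.Icc a b, HasDerivAt (fun t => qBS K t y)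
      (y * ((Real.sqrt (2 * Real.pi))⁻¹ *
        Real.exp (-((2 * Real.log (y / K) + x) / (2 * Real.sqrt x)) ^ 2 / 2)) *
        (1 / (2 * Real.sqrt x))) x := fun x hx => qBS_hasDerivAt hK hy (lt_of_lt_of_le ha hx.1)
  have mono1 : MonotoneOn (fun t => qBS K t y) (Set.Icc a b) := by
    apply monotoneOn_of_deriv_nonneg (convex_Icc a b)
    · exact fun x hx => (hdf x hx).continuousAt.continuousWithinAt
    · intro x hx
      rw [interior_Icc] at hx
      exact (hdf x (Set.mem_Icc_of_Ioo hx)).differentiableAt.differentiableWithinAt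
    · intro x hx
      rw [interior_Icc] at hx
      rw [(hdf x (Set.mem_Icc_of_Ioo hx)).deriv]
      positivity
  have mono2 : MonotoneOn (fun t => C * Real.sqrt t - qBS K t y) (Set.Icc a b) := by
    have hg : ∀ x ∈ Set.Icc a b, HasDerivAt (fun t => C * Real.sqrt t - qBS K t y)
        (C * (1 / (2 * Real.sqrt x)) - (y * ((Real.sqrt (2 * Real.pi))⁻¹ *
          Real.exp (-((2 * Real.log (y / K) + x) / (2 * Real.sqrt x)) ^ 2 / 2)) *
          (1 / (2 * Real.sqrt x)))) x := by
      intro x hx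
      have hx0 : 0 < x := lt_of_lt_of_le ha hx.1
      exact ((Real.hasDerivAt_sqrt hx0.ne').const_mul C).sub (hdf x hx)
    apply monotoneOn_of_deriv_nonneg (convex_Icc a b)
    · exact fun x hx => (hg x hx).continuousAt.continuousWithinAt
    · intro x hx
      rw [interior_Icc] at hx
      exact (hg x (Set.mem_Icc_of_Ioo hx)).differentiableAt.differentiableWithinAt
    · intro x hx
      rw [interior_Icc] at hx
      rw [(hg x (Set.mem_Icc_of_Ioo hx)).deriv]
      have := vega_le hK hy (lt_of_lt_of_le ha (Set.mem_Icc_of_Ioo hx).1)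
      rw [hC]
      linarith
  have hmem_a : a ∈ Set.Icc a b := ⟨le_rfl, hab⟩
  have hmem_b : b ∈ Set.Icc a b := ⟨hab, le_rfl⟩
  have h1 : qBS K a y ≤ qBS K b y := mono1 hmem_a hmem_b hab
  have h2 : C * Real.sqrt a - qBS K a y ≤ C * Real.sqrt b - qBS K b y := mono2 hmem_a hmem_b hab
  rw [abs_sub_comm, abs_of_nonneg (by linarith)]
  linarith [h2, mul_sub C (Real.sqrt b) (Real.sqrt a)]

lemma qBS_abs_le {K y : ℝ} (hK : 0 < K) (hy : 0 < y) (t : ℝ) : |qBS K t y| ≤ y + K := by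
  unfold qBS
  have h1 := normCdf_nonneg ((2 * Real.log (y / K) + t) / (2 * Real.sqrt t))
  have h2 := normCdf_le_one ((2 * Real.log (y / K) + t) / (2 * Real.sqrt t))
  have h3 := normCdf_nonneg ((2 * Real.log (y / K) - t) / (2 * Real.sqrt t))
  have h4 := normCdf_le_one ((2 * Real.log (y / K) - t) / (2 * Real.sqrt t))
  rw [abs_le]
  constructor <;> nlinarith

end auxQBS

section auxBeta

lemma beta_ae_eq {u v : ℝ} :
    ∀ x ∈ Set.Ioo (0:ℝ) 1,
      ((x:ℂ) ^ ((u:ℂ) - 1) * ((1:ℂ) - x) ^ ((v:ℂ) - 1))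
        = ((x ^ (u-1) * (1-x) ^ (v-1) : ℝ) : ℂ) := by
  intro x hx
  rw [Complex.ofReal_mul, Complex.ofReal_cpow hx.1.le,
    Complex.ofReal_cpow (by linarith [hx.2] : (0:ℝ) ≤ 1 - x)]
  push_cast
  ring

lemma betaIntegrableOn {u v : ℝ} (hu : 0 < u) (hv : 0 < v) :
    IntegrableOn (fun s : ℝ => s ^ (u-1) * (1-s) ^ (v-1)) (Set.Ioo 0 1) := by
  have h := Complex.betaIntegral_convergent (u := (u:ℂ)) (v := (v:ℂ)) (by simpa) (by simpa)
  rw [intervalIntegrable_iff, uIoc_of_le (by norm_num : (0:ℝ) ≤ 1)] at h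
  have h2 : IntegrableOn (fun x : ℝ => (x:ℂ) ^ ((u:ℂ) - 1) * ((1:ℂ) - x) ^ ((v:ℂ) - 1))
      (Set.Ioo 0 1) := h.mono_set Set.Ioo_subset_Ioc_self
  have h3 := h2.re
  apply (IntegrableOn.congr_fun h3 ?_ measurableSet_Ioo)
  intro x hx
  show RCLike.re ((x:ℂ) ^ ((u:ℂ) - 1) * ((1:ℂ) - x) ^ ((v:ℂ) - 1)) = _
  rw [beta_ae_eq x hx]
  simp [RCLike.ofReal_re]

lemma realBetaIntegral {u v : ℝ} (hu : 0 < u) (hv : 0 < v) :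
    ∫ s in Set.Ioo (0:ℝ) 1, s ^ (u-1) * (1-s) ^ (v-1)
      = Real.Gamma u * Real.Gamma v / Real.Gamma (u+v) := by
  have key := Complex.Gamma_mul_Gamma_eq_betaIntegral (s := (u:ℂ)) (t := (v:ℂ))
    (by simpa) (by simpa)
  have hbeta : Complex.betaIntegral (u:ℂ) (v:ℂ)
      = ((∫ s in Set.Ioo (0:ℝ) 1, s ^ (u-1) * (1-s) ^ (v-1) : ℝ) : ℂ) := by
    rw [Complex.betaIntegral, intervalIntegral.integral_of_le (by norm_num : (0:ℝ) ≤ 1),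
      integral_Ioc_eq_integral_Ioo]
    rw [setIntegral_congr_fun measurableSet_Ioo beta_ae_eq]
    exact integral_ofReal
  rw [hbeta, Complex.Gamma_ofReal, Complex.Gamma_ofReal, ← Complex.ofReal_add,
    Complex.Gamma_ofReal, ← Complex.ofReal_mul, ← Complex.ofReal_mul] at key
  have := Complex.ofReal_injective key
  have hg : Real.Gamma (u+v) ≠ 0 := (Real.Gamma_pos_of_pos (by linarith)).ne'
  field_simp
  linarith [this]

end auxBeta

lemma weight_qBS_integrableOn {K α y r : ℝ} (hK : 0 < K) (hy : 0 < y)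
    (hα : α ∈ Set.Ioo (1/2 : ℝ) 1) (hr : 0 < r) :
    IntegrableOn (fun u : ℝ => u ^ (α - 1) * (1 - u) ^ (-α) * qBS K (r * u) y)
      (Set.Ioo 0 1) := by
  have hcont : ContinuousOn (fun u : ℝ => u ^ (α - 1) * (1 - u) ^ (-α) * qBS K (r * u) y)
      (Set.Ioo 0 1) := by
    intro u hu
    apply ContinuousWithinAt.mul
    · apply ContinuousWithinAt.mul
      · exact (Real.continuousAt_rpow_const u (α - 1) (Or.inl hu.1.ne')).continuousWithinAt
      · have h1u : (1:ℝ) - u ≠ 0 := by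
          have : (0:ℝ) < 1 - u := by linarith [hu.2]
          exact this.ne'
        exact ((Real.continuousAt_rpow_const (1 - u) (-α) (Or.inl h1u)).comp
          ((continuous_const.sub continuous_id).continuousAt)).continuousWithinAt
    · exact ((qBS_hasDerivAt hK hy (mul_pos hr hu.1)).continuousAt.comp
        ((continuous_const.mul continuous_id).continuousAt)).continuousWithinAt
  apply Integrable.mono' (((betaIntegrableOn (by linarith [hα.1] : (0:ℝ) < α)
      (by linarith [hα.2] : (0:ℝ) < 1 - α)).const_mul (y + K)))
    (hcont.aestronglyMeasurable measurableSet_Ioo)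
  filter_upwards [ae_restrict_mem measurableSet_Ioo] with u hu
  have h1 : (0:ℝ) ≤ u ^ (α - 1) := Real.rpow_nonneg hu.1.le _
  have h2 : (0:ℝ) ≤ (1 - u) ^ (-α) := Real.rpow_nonneg (by linarith [hu.2]) _
  have hq := qBS_abs_le hK hy (r * u)
  rw [Real.norm_eq_abs, abs_mul, abs_mul, abs_of_nonneg h1, abs_of_nonneg h2]
  have hexp : (1 - u) ^ ((1 - α) - 1) = (1 - u) ^ (-α) := by norm_num
  rw [hexp]
  calc u ^ (α - 1) * (1 - u) ^ (-α) * |qBS K (r * u) y|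
      ≤ u ^ (α - 1) * (1 - u) ^ (-α) * (y + K) :=
        mul_le_mul_of_nonneg_left hq (mul_nonneg h1 h2)
    _ = (y + K) * (u ^ (α - 1) * (1 - u) ^ (-α)) := by ring

/-- For `0 < s < t` and `y > 0`,
`|q*(t−s,y) − q*(t,y)| ≤ (Γ(α−1/2)/(πΓ(α))) √(Ky) (√t − √(t−s))`. -/
theorem qStar_time_increment_bound
    (K α : ℝ) (hK : 0 < K) (hα : α ∈ Set.Ioo (1 / 2 : ℝ) 1) :
    ∀ s t y : ℝ, 0 < s → s < t → 0 < y →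
      |qStar K α (t - s) y - qStar K α t y|
        ≤ Real.Gamma (α - 1 / 2) / (Real.pi * Real.Gamma α) * Real.sqrt (K * y)
            * (Real.sqrt t - Real.sqrt (t - s)) := by
  intro s t y hs hst hy
  have ha : (0:ℝ) < t - s := by linarith
  have hb : (0:ℝ) < t := by linarith
  have hab : t - s ≤ t := by linarith
  have hΓα : 0 < Real.Gamma α := Real.Gamma_pos_of_pos (by linarith [hα.1])
  have hΓ1α : 0 < Real.Gamma (1 - α) := Real.Gamma_pos_of_pos (by linarith [hα.2])
  have hΓ05 : 0 < Real.Gamma (α - 1/2) := Real.Gamma_pos_of_pos (by linarith [hα.1])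
  set C0 := Real.sqrt (K * y) * (Real.sqrt (2 * Real.pi))⁻¹ *
      (Real.sqrt t - Real.sqrt (t - s)) with hC0
  have hsqle : Real.sqrt (t - s) ≤ Real.sqrt t := Real.sqrt_le_sqrt hab
  have hC0n : 0 ≤ C0 := by
    apply mul_nonneg (by positivity)
    linarith
  have hIA := weight_qBS_integrableOn (r := t - s) hK hy hα ha
  have hIB := weight_qBS_integrableOn (r := t) hK hy hα hb
  have hIh : IntegrableOn (fun u : ℝ =>
      C0 * (u ^ ((α - 1/2) - 1) * (1 - u) ^ ((1 - α) - 1))) (Set.Ioo 0 1) :=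
    (betaIntegrableOn (by linarith [hα.1] : (0:ℝ) < α - 1/2)
      (by linarith [hα.2] : (0:ℝ) < 1 - α)).const_mul C0
  -- pointwise bound
  have hpt : ∀ u ∈ Set.Ioo (0:ℝ) 1,
      |u ^ (α - 1) * (1 - u) ^ (-α) * qBS K ((t - s) * u) y
        - u ^ (α - 1) * (1 - u) ^ (-α) * qBS K (t * u) y|
      ≤ C0 * (u ^ ((α - 1/2) - 1) * (1 - u) ^ ((1 - α) - 1)) := by
    intro u hu
    have hu0 : 0 < u := hu.1
    have hu1 : (0:ℝ) < 1 - u := by linarith [hu.2]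
    have h1 : (0:ℝ) ≤ u ^ (α - 1) := Real.rpow_nonneg hu0.le _
    have h2 : (0:ℝ) ≤ (1 - u) ^ (-α) := Real.rpow_nonneg hu1.le _
    rw [← mul_sub, abs_mul, abs_of_nonneg (mul_nonneg h1 h2)]
    have hd := qBS_abs_sub_le (a := (t - s) * u) (b := t * u) hK hy (mul_pos ha hu0)
      (by nlinarith)
    have hsqm : Real.sqrt (t * u) - Real.sqrt ((t - s) * u)
        = (Real.sqrt t - Real.sqrt (t - s)) * Real.sqrt u := by
      rw [Real.sqrt_mul hb.le, Real.sqrt_mul ha.le]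
      ring
    rw [hsqm] at hd
    calc u ^ (α - 1) * (1 - u) ^ (-α) * |qBS K ((t - s) * u) y - qBS K (t * u) y|
        ≤ u ^ (α - 1) * (1 - u) ^ (-α) *
            (Real.sqrt (K * y) * (Real.sqrt (2 * Real.pi))⁻¹ *
              ((Real.sqrt t - Real.sqrt (t - s)) * Real.sqrt u)) :=
          mul_le_mul_of_nonneg_left hd (mul_nonneg h1 h2)
      _ = C0 * (u ^ (α - 1) * Real.sqrt u * (1 - u) ^ (-α)) := by rw [hC0]; ring
      _ ≤ C0 * (u ^ ((α - 1/2) - 1) * (1 - u) ^ ((1 - α) - 1)) := by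
          apply mul_le_mul_of_nonneg_left _ hC0n
          have hexp2 : (1 - u) ^ ((1 - α) - 1) = (1 - u) ^ (-α) := by norm_num
          rw [hexp2]
          apply mul_le_mul_of_nonneg_right _ h2
          rw [Real.sqrt_eq_rpow, ← Real.rpow_add hu0]
          exact Real.rpow_le_rpow_of_exponent_ge hu0 hu.2.le (by linarith)
    -- end pointwise
  -- main computation
  rw [qStar, qStar, if_neg ha.ne', if_neg hb.ne', ← mul_sub,
    ← integral_sub hIA hIB]
  rw [abs_mul, abs_of_nonneg (by positivity : (0:ℝ) ≤ (Real.Gamma α * Real.Gamma (1 - α))⁻¹)]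
  have habs : |∫ u in Set.Ioo (0:ℝ) 1,
      (u ^ (α - 1) * (1 - u) ^ (-α) * qBS K ((t - s) * u) y
        - u ^ (α - 1) * (1 - u) ^ (-α) * qBS K (t * u) y)|
      ≤ ∫ u in Set.Ioo (0:ℝ) 1,
          C0 * (u ^ ((α - 1/2) - 1) * (1 - u) ^ ((1 - α) - 1)) := by
    refine le_trans ?_ (setIntegral_mono_on ((hIA.sub hIB).abs) hIh measurableSet_Ioo hpt)
    have := norm_integral_le_integral_norm (μ := volume.restrict (Set.Ioo (0:ℝ) 1))
      (f := fun u : ℝ => u ^ (α - 1) * (1 - u) ^ (-α) * qBS K ((t - s) * u) y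
        - u ^ (α - 1) * (1 - u) ^ (-α) * qBS K (t * u) y)
    simpa [Real.norm_eq_abs] using this
  have hval : (∫ u in Set.Ioo (0:ℝ) 1,
      C0 * (u ^ ((α - 1/2) - 1) * (1 - u) ^ ((1 - α) - 1)))
      = C0 * (Real.Gamma (α - 1/2) * Real.Gamma (1 - α) / Real.sqrt Real.pi) := by
    rw [integral_const_mul, realBetaIntegral (by linarith [hα.1]) (by linarith [hα.2]),
      show α - 1/2 + (1 - α) = 1/2 by ring, Real.Gamma_one_half_eq]
  rw [hval] at habs
  have hstep : (Real.Gamma α * Real.Gamma (1 - α))⁻¹ *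
      (C0 * (Real.Gamma (α - 1/2) * Real.Gamma (1 - α) / Real.sqrt Real.pi))
      ≤ Real.Gamma (α - 1/2) / (Real.pi * Real.Gamma α) * Real.sqrt (K * y)
          * (Real.sqrt t - Real.sqrt (t - s)) := by
    have hπ : 0 < Real.pi := Real.pi_pos
    have hsπ : 0 < Real.sqrt Real.pi := Real.sqrt_pos.2 hπ
    have hs2π : 0 < Real.sqrt (2 * Real.pi) := Real.sqrt_pos.2 (by positivity)
    have hid : Real.sqrt (2 * Real.pi) * Real.sqrt Real.pi = Real.sqrt 2 * Real.pi := by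
      rw [Real.sqrt_mul (by norm_num : (0:ℝ) ≤ 2), mul_assoc,
        Real.mul_self_sqrt hπ.le]
    have hs2 : (1:ℝ) ≤ Real.sqrt 2 := by
      rw [show (1:ℝ) = Real.sqrt 1 by simp]
      exact Real.sqrt_le_sqrt (by norm_num)
    have lhs_eq : (Real.Gamma α * Real.Gamma (1 - α))⁻¹ *
        (C0 * (Real.Gamma (α - 1/2) * Real.Gamma (1 - α) / Real.sqrt Real.pi))
        = Real.Gamma (α - 1/2) / (Real.sqrt (2 * Real.pi) * Real.sqrt Real.pi * Real.Gamma α)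
          * Real.sqrt (K * y) * (Real.sqrt t - Real.sqrt (t - s)) := by
      rw [hC0]
      field_simp
    rw [lhs_eq, hid]
    have hden : Real.pi * Real.Gamma α ≤ Real.sqrt 2 * Real.pi * Real.Gamma α := by
      nlinarith [mul_pos hπ hΓα]
    have hfrac : Real.Gamma (α - 1/2) / (Real.sqrt 2 * Real.pi * Real.Gamma α)
        ≤ Real.Gamma (α - 1/2) / (Real.pi * Real.Gamma α) := by
      gcongr
    apply mul_le_mul_of_nonneg_right _ (by linarith)
    apply mul_le_mul_of_nonneg_right hfrac (by positivity)
  calc (Real.Gamma α * Real.Gamma (1 - α))⁻¹ * |∫ u in Set.Ioo (0:ℝ) 1,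
      (u ^ (α - 1) * (1 - u) ^ (-α) * qBS K ((t - s) * u) y
        - u ^ (α - 1) * (1 - u) ^ (-α) * qBS K (t * u) y)|
      ≤ (Real.Gamma α * Real.Gamma (1 - α))⁻¹ *
        (C0 * (Real.Gamma (α - 1/2) * Real.Gamma (1 - α) / Real.sqrt Real.pi)) :=
        mul_le_mul_of_nonneg_left habs (by positivity)
    _ ≤ _ := hstep
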